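/- arXiv:2408.00398 — 3 statements merged into one kernel-verified Lean document; each statement's English description precedes it below -/
import Mathlib

section
/- Let G = (V,E) be a finite connected simple graph with edge-weight function w : E → ℝ, and let T ⊆ E be a spanning tree of G. Then T is a minimum spanning tree of G if and only if for every non-tree edge e = {u,v} ∈ E \ T and every edge f lying on the unique path between u and v in the tree (V,T), one has w(f) ≤ w(e). -/
open SimpleGraph

section Helpers

variable {V : Type*}

/-- Predicate propagation along walks. -/
lemma walk_prop {A : SimpleGraph V} (P : V → Prop)
    (hP : ∀ a b, A.Adj a b → P a → P b) :
    ∀ {x y : V}, A.Walk x y → P x → P y := by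
  intro x y q
  induction q with
  | nil => exact id
  | cons h q ih => intro hx; exact ih (hP _ _ h hx)

lemma reach_prop {A : SimpleGraph V} (P : V → Prop)
    (hP : ∀ a b, A.Adj a b → P a → P b) {x y : V}
    (h : A.Reachable x y) (hx : P x) : P y := by
  obtain ⟨q⟩ := h
  exact walk_prop P hP q hx

lemma connected_of_forall_reach {A B : SimpleGraph V} (hA : A.Connected)
    (h : ∀ a b, A.Adj a b → B.Reachable a b) : B.Connected := by
  have hne : Nonempty V := hA.nonempty
  rw [connected_iff]
  refine ⟨fun x y => ?_, hne⟩
  exact reach_prop (fun z => B.Reachable x z)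
    (fun a b hab hr => hr.trans (h a b hab)) (hA.preconnected x y) (Reachable.refl x)

lemma exists_crossing_edge {A : SimpleGraph V} (P : V → Prop) :
    ∀ {x y : V} (q : A.Walk x y), P x → ¬ P y →
      ∃ a b, s(a, b) ∈ q.edges ∧ P a ∧ ¬ P b := by
  intro x y q
  induction q with
  | nil => intro hx hy; exact absurd hx hy
  | @cons x w y h q ih =>
    intro hx hy
    by_cases hmid : P w
    · obtain ⟨a, b, hm, ha, hb⟩ := ih hmid hy
      exact ⟨a, b, List.mem_cons_of_mem _ hm, ha, hb⟩
    · exact ⟨x, w, List.mem_cons_self, hx, hmid⟩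

lemma edges_mem_of_walk {X : Set (Sym2 V)} {u v : V}
    (q : (fromEdgeSet X).Walk u v) {g : Sym2 V} (hg : g ∈ q.edges) : g ∈ X := by
  have := q.edges_subset_edgeSet hg
  rw [edgeSet_fromEdgeSet] at this
  exact this.1

lemma isAcyclic_mono {A B : SimpleGraph V} (h : A ≤ B) (hB : B.IsAcyclic) :
    A.IsAcyclic := by
  intro x c hc
  have hsub : ∀ g ∈ c.edges, g ∈ B.edgeSet :=
    fun g hg => edgeSet_mono h (c.edges_subset_edgeSet hg)
  exact hB (c.transfer B hsub) (hc.transfer hsub)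

/-- After deleting edge `s(a,b)` belonging to a cycle, its endpoints remain reachable. -/
lemma reachable_endpoints {S : Set (Sym2 V)} {x : V}
    (c : (fromEdgeSet S).Walk x x) (hc : c.IsCycle) {a b : V}
    (hab : s(a, b) ∈ c.edges) :
    (fromEdgeSet (S \ {s(a, b)})).Reachable a b := by
  have hnb : ¬ (fromEdgeSet S).IsBridge s(a, b) := by
    rw [isBridge_iff_adj_and_forall_cycle_notMem (c.edges_subset_edgeSet hab)]
    push_neg
    exact ⟨x, c, hc, hab⟩
  rw [isBridge_iff] at hnb
  push_neg at hnb
  have hadj : (fromEdgeSet S).Adj a b :=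
    (fromEdgeSet S).mem_edgeSet.mp (c.edges_subset_edgeSet hab)
  have := hnb
  rwa [deleteEdges, ← fromEdgeSet_sdiff] at this

/-- Inserting an edge between non-reachable vertices preserves acyclicity. -/
lemma isAcyclic_insert {S : Set (Sym2 V)} (hS : (fromEdgeSet S).IsAcyclic)
    {u v : V} (hr : ¬ (fromEdgeSet S).Reachable u v) :
    (fromEdgeSet (insert s(u, v) S)).IsAcyclic := by
  intro x c hc
  by_cases he : s(u, v) ∈ c.edges
  · have hre := reachable_endpoints c hc he
    refine hr (hre.mono ?_)
    apply fromEdgeSet_mono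
    intro g hg
    rcases hg with ⟨hg1, hg2⟩
    rcases hg1 with rfl | hg1
    · exact absurd rfl hg2
    · exact hg1
  · have hsub : ∀ g ∈ c.edges, g ∈ (fromEdgeSet S).edgeSet := by
      intro g hg
      have := c.edges_subset_edgeSet hg
      rw [edgeSet_fromEdgeSet] at this ⊢
      rcases this with ⟨hmem, hdiag⟩
      rcases hmem with rfl | hmem
      · exact absurd hg he
      · exact ⟨hmem, hdiag⟩
    exact hS (c.transfer _ hsub) (hc.transfer hsub)

/-- Removing an edge of a path in an acyclic graph disconnects the path's endpoints. -/
lemma not_reachable_delete [DecidableEq V] {T : Set (Sym2 V)}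
    (hT : (fromEdgeSet T).IsAcyclic) {u v : V}
    (p : (fromEdgeSet T).Path u v) {f : Sym2 V} (hf : f ∈ p.1.edges) :
    ¬ (fromEdgeSet (T \ {f})).Reachable u v := by
  rintro ⟨q0⟩
  let q := q0.toPath
  have hsub : ∀ g ∈ q.1.edges, g ∈ (fromEdgeSet T).edgeSet := by
    intro g hg
    have h1 := q.1.edges_subset_edgeSet hg
    rw [edgeSet_fromEdgeSet] at h1 ⊢
    exact ⟨h1.1.1, h1.2⟩
  have hfq : f ∉ q.1.edges := by
    intro hgq
    have := edges_mem_of_walk q.1 hgq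
    exact this.2 rfl
  let q' : (fromEdgeSet T).Path u v := ⟨q.1.transfer _ hsub, q.2.transfer hsub⟩
  have : q' = p := hT.path_unique q' p
  rw [← this] at hf
  have : f ∈ q.1.edges := by
    have := hf
    rwa [Walk.edges_transfer] at this
  exact hfq this

end Helpers

/-- `T` is a spanning tree of `G`: a set of edges of `G` whose graph is a tree on all of `V`. -/
def isSpanningTree {V : Type*} (G : SimpleGraph V) (T : Set (Sym2 V)) : Prop :=
  T ⊆ G.edgeSet ∧ (SimpleGraph.fromEdgeSet T).IsTree

/-- `T` is a minimum spanning tree of `G` with respect to the weight function `w`. -/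
def isMST {V : Type*} (G : SimpleGraph V) (w : Sym2 V → ℝ) (T : Finset (Sym2 V)) : Prop :=
  isSpanningTree G ↑T ∧
    ∀ T' : Finset (Sym2 V), isSpanningTree G ↑T' → ∑ e ∈ T, w e ≤ ∑ e ∈ T', w e

/-- A spanning tree `T` of a finite connected graph `G` is a minimum spanning tree iff for
every non-tree edge `{u,v}` and every edge `f` on the unique path between `u` and `v`
in the tree, `w f ≤ w {u,v}`. -/
theorem mst_iff_cut_condition {V : Type*} [Fintype V] [DecidableEq V]
    (G : SimpleGraph V) (hG : G.Connected) (w : Sym2 V → ℝ)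
    (T : Finset (Sym2 V)) (hST : isSpanningTree G ↑T) :
    isMST G w T ↔
      ∀ u v : V, s(u, v) ∈ G.edgeSet → s(u, v) ∉ T →
        ∀ p : (SimpleGraph.fromEdgeSet (↑T : Set (Sym2 V))).Path u v,
          ∀ f ∈ p.1.edges, w f ≤ w s(u, v) := by
  have hTE : (↑T : Set (Sym2 V)) ⊆ G.edgeSet := hST.1
  have hTree := hST.2
  constructor
  · -- forward direction
    intro hMST u v heE heT p f
    induction f using Sym2.ind with
    | _ a b =>
    intro hf
    have huv : u ≠ v := (G.mem_edgeSet.mp heE).ne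
    have hfT : s(a, b) ∈ T := by
      have := edges_mem_of_walk p.1 hf
      exact_mod_cast this
    have hab : a ≠ b := (G.mem_edgeSet.mp (hTE (by exact_mod_cast hfT))).ne
    have hef : s(u, v) ≠ s(a, b) := fun h => heT (h ▸ hfT)
    set T'' : Finset (Sym2 V) := insert s(u, v) (T.erase s(a, b)) with hT''def
    have hcoe : (↑T'' : Set (Sym2 V)) = insert s(u, v) ((↑T : Set (Sym2 V)) \ {s(a, b)}) := by
      simp [hT''def]
    set H := SimpleGraph.fromEdgeSet (insert s(u, v) (↑T : Set (Sym2 V))) with hHdef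
    have hsubH : ∀ g ∈ p.1.edges, g ∈ H.edgeSet := by
      intro g hg
      have h1 := p.1.edges_subset_edgeSet hg
      rw [edgeSet_fromEdgeSet] at h1
      rw [hHdef, edgeSet_fromEdgeSet]
      exact ⟨Set.mem_insert_of_mem _ h1.1, h1.2⟩
    have hadjH : H.Adj v u := by
      rw [hHdef, fromEdgeSet_adj]
      exact ⟨by rw [Sym2.eq_swap]; exact Set.mem_insert _ _, huv.symm⟩
    have hcyc : (SimpleGraph.Walk.cons hadjH (p.1.transfer H hsubH)).IsCycle := by
      rw [SimpleGraph.Walk.cons_isCycle_iff]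
      refine ⟨p.2.transfer hsubH, ?_⟩
      rw [SimpleGraph.Walk.edges_transfer, Sym2.eq_swap]
      intro hmem
      exact heT (by exact_mod_cast edges_mem_of_walk p.1 hmem)
    have hfc : s(a, b) ∈ (SimpleGraph.Walk.cons hadjH (p.1.transfer H hsubH)).edges := by
      rw [SimpleGraph.Walk.edges_cons]
      exact List.mem_cons_of_mem _ (by rw [SimpleGraph.Walk.edges_transfer]; exact hf)
    have hreach := reachable_endpoints (S := insert s(u, v) (↑T : Set (Sym2 V)))
      (SimpleGraph.Walk.cons hadjH (p.1.transfer H hsubH)) hcyc hfc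
    have hsetEq : (insert s(u, v) (↑T : Set (Sym2 V))) \ {s(a, b)} = (↑T'' : Set (Sym2 V)) := by
      rw [hcoe, Set.insert_diff_singleton_comm hef]
    rw [hsetEq] at hreach
    have hconn : (SimpleGraph.fromEdgeSet (↑T'' : Set (Sym2 V))).Connected := by
      refine connected_of_forall_reach hTree.isConnected ?_
      intro x y hxy
      rw [fromEdgeSet_adj] at hxy
      obtain ⟨hxyT, hxyne⟩ := hxy
      by_cases hxf : s(x, y) = s(a, b)
      · rw [Sym2.eq_iff] at hxf
        rcases hxf with ⟨rfl, rfl⟩ | ⟨rfl, rfl⟩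
        · exact hreach
        · exact hreach.symm
      · refine SimpleGraph.Adj.reachable ?_
        rw [fromEdgeSet_adj, hcoe]
        exact ⟨Set.mem_insert_of_mem _ ⟨hxyT, hxf⟩, hxyne⟩
    have hacy : (SimpleGraph.fromEdgeSet (↑T'' : Set (Sym2 V))).IsAcyclic := by
      rw [hcoe]
      refine isAcyclic_insert ?_ ?_
      · exact isAcyclic_mono (fromEdgeSet_mono Set.diff_subset) hTree.IsAcyclic
      · exact not_reachable_delete hTree.IsAcyclic p hf
    have hSTT'' : isSpanningTree G ↑T'' := by
      refine ⟨?_, hconn, hacy⟩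
      rw [hcoe]
      intro g hg
      rcases hg with rfl | hg
      · exact heE
      · exact hTE hg.1
    have hle := hMST.2 T'' hSTT''
    have heT'' : s(u, v) ∉ T.erase s(a, b) := fun h => heT (Finset.mem_of_mem_erase h)
    rw [hT''def, Finset.sum_insert heT''] at hle
    have hsum : w s(a, b) + ∑ g ∈ T.erase s(a, b), w g = ∑ g ∈ T, w g :=
      Finset.add_sum_erase T w hfT
    linarith
  · -- backward direction
    intro hcond
    refine ⟨hST, ?_⟩
    suffices Hmain : ∀ n (T' : Finset (Sym2 V)), (T' \ T).card = n →
        isSpanningTree G ↑T' → ∑ g ∈ T, w g ≤ ∑ g ∈ T', w g by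
      exact fun T' hT' => Hmain _ T' rfl hT'
    intro n
    induction n using Nat.strong_induction_on with
    | _ n ih =>
    intro T' hcard hT'
    rcases Finset.eq_empty_or_nonempty (T' \ T) with hempty | ⟨e, he⟩
    · have hsub : T' ⊆ T := Finset.sdiff_eq_empty_iff_subset.mp hempty
      have hTT' : T ⊆ T' := by
        intro g hg
        by_contra hgT'
        revert hg hgT'
        induction g using Sym2.ind with
        | _ a b =>
        intro hg hgT'
        have hab : a ≠ b := (G.mem_edgeSet.mp (hTE (by exact_mod_cast hg))).ne
        obtain ⟨q0⟩ := hT'.2.isConnected.preconnected a b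
        set q := q0.toPath with hqdef
        have hsubT : ∀ g' ∈ q.1.edges, g' ∈ (SimpleGraph.fromEdgeSet (↑T : Set (Sym2 V))).edgeSet := by
          intro g' hg'
          have h1 := q.1.edges_subset_edgeSet hg'
          rw [edgeSet_fromEdgeSet] at h1 ⊢
          refine ⟨?_, h1.2⟩
          have : g' ∈ T' := by exact_mod_cast h1.1
          exact_mod_cast hsub this
        have hadj : (SimpleGraph.fromEdgeSet (↑T : Set (Sym2 V))).Adj b a := by
          rw [fromEdgeSet_adj]
          exact ⟨by rw [Sym2.eq_swap]; exact_mod_cast hg, hab.symm⟩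
        have hcyc : (SimpleGraph.Walk.cons hadj (q.1.transfer _ hsubT)).IsCycle := by
          rw [SimpleGraph.Walk.cons_isCycle_iff]
          refine ⟨q.2.transfer hsubT, ?_⟩
          rw [SimpleGraph.Walk.edges_transfer, Sym2.eq_swap]
          intro hmem
          exact hgT' (by exact_mod_cast edges_mem_of_walk q.1 hmem)
        exact hST.2.IsAcyclic _ hcyc
      rw [Finset.Subset.antisymm hTT' hsub]
    · revert he
      induction e using Sym2.ind with
      | _ u v =>
      intro he
      have heT' : s(u, v) ∈ T' := (Finset.mem_sdiff.mp he).1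
      have heT : s(u, v) ∉ T := (Finset.mem_sdiff.mp he).2
      have heE : s(u, v) ∈ G.edgeSet := hT'.1 (by exact_mod_cast heT')
      have huv : u ≠ v := (G.mem_edgeSet.mp heE).ne
      have hbr := (isAcyclic_iff_forall_edge_isBridge.mp hT'.2.IsAcyclic)
        (show s(u, v) ∈ (SimpleGraph.fromEdgeSet (↑T' : Set (Sym2 V))).edgeSet by
          rw [edgeSet_fromEdgeSet]
          exact ⟨by exact_mod_cast heT', by simp [huv]⟩)
      rw [isBridge_iff] at hbr
      have hnruv : ¬ (SimpleGraph.fromEdgeSet ((↑T' : Set (Sym2 V)) \ {s(u, v)})).Reachable u v := by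
        rw [fromEdgeSet_sdiff]
        exact hbr
      set A := SimpleGraph.fromEdgeSet ((↑T' : Set (Sym2 V)) \ {s(u, v)}) with hAdef
      have hPall : ∀ z, A.Reachable z u ∨ A.Reachable z v := by
        intro z
        refine reach_prop (fun z => A.Reachable z u ∨ A.Reachable z v) ?_
          (hT'.2.isConnected.preconnected u z) (Or.inl (SimpleGraph.Reachable.refl u))
        intro x y hxy hx
        rw [fromEdgeSet_adj] at hxy
        obtain ⟨hxyT', hxyne⟩ := hxy
        by_cases hxe : s(x, y) = s(u, v)
        · rw [Sym2.eq_iff] at hxe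
          rcases hxe with ⟨rfl, rfl⟩ | ⟨rfl, rfl⟩
          · exact Or.inr (SimpleGraph.Reachable.refl _)
          · exact Or.inl (SimpleGraph.Reachable.refl _)
        · have hadjA : A.Adj x y := by
            rw [hAdef, fromEdgeSet_adj]
            exact ⟨⟨hxyT', hxe⟩, hxyne⟩
          rcases hx with h | h
          · exact Or.inl (hadjA.symm.reachable.trans h)
          · exact Or.inr (hadjA.symm.reachable.trans h)
      obtain ⟨p0⟩ := hTree.isConnected.preconnected u v
      set p := p0.toPath with hpdef
      obtain ⟨a, b, hfp, hQa, hQb⟩ := exists_crossing_edge (fun z => A.Reachable u z) p.1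
        (SimpleGraph.Reachable.refl u) (fun h => hnruv h)
      have hfT : s(a, b) ∈ T := by exact_mod_cast edges_mem_of_walk p.1 hfp
      have habne : a ≠ b := (G.mem_edgeSet.mp (hTE (by exact_mod_cast hfT))).ne
      have hfe : s(a, b) ≠ s(u, v) := fun h => heT (h ▸ hfT)
      have hfT' : s(a, b) ∉ T' := by
        intro h
        refine hQb (hQa.trans (SimpleGraph.Adj.reachable ?_))
        rw [hAdef, fromEdgeSet_adj]
        exact ⟨⟨by exact_mod_cast h, hfe⟩, habne⟩
      have hbv : A.Reachable b v := by
        rcases hPall b with h | h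
        · exact absurd h.symm hQb
        · exact h
      have hwf : w s(a, b) ≤ w s(u, v) := hcond u v heE heT p s(a, b) hfp
      set T'' : Finset (Sym2 V) := insert s(a, b) (T'.erase s(u, v)) with hT''def
      have hcoe : (↑T'' : Set (Sym2 V)) = insert s(a, b) ((↑T' : Set (Sym2 V)) \ {s(u, v)}) := by
        simp [hT''def]
      have hAle : A ≤ SimpleGraph.fromEdgeSet (↑T'' : Set (Sym2 V)) := by
        rw [hAdef, hcoe]
        exact fromEdgeSet_mono (Set.subset_insert _ _)
      have hadjf : (SimpleGraph.fromEdgeSet (↑T'' : Set (Sym2 V))).Adj a b := by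
        rw [fromEdgeSet_adj, hcoe]
        exact ⟨Set.mem_insert _ _, habne⟩
      have hruv : (SimpleGraph.fromEdgeSet (↑T'' : Set (Sym2 V))).Reachable u v :=
        ((hQa.mono hAle).trans hadjf.reachable).trans (hbv.mono hAle)
      have hconn : (SimpleGraph.fromEdgeSet (↑T'' : Set (Sym2 V))).Connected := by
        refine connected_of_forall_reach hT'.2.isConnected ?_
        intro x y hxy
        rw [fromEdgeSet_adj] at hxy
        obtain ⟨hxyT', hxyne⟩ := hxy
        by_cases hxe : s(x, y) = s(u, v)
        · rw [Sym2.eq_iff] at hxe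
          rcases hxe with ⟨rfl, rfl⟩ | ⟨rfl, rfl⟩
          · exact hruv
          · exact hruv.symm
        · refine SimpleGraph.Adj.reachable ?_
          rw [fromEdgeSet_adj, hcoe]
          exact ⟨Set.mem_insert_of_mem _ ⟨hxyT', hxe⟩, hxyne⟩
      have hacy : (SimpleGraph.fromEdgeSet (↑T'' : Set (Sym2 V))).IsAcyclic := by
        rw [hcoe]
        refine isAcyclic_insert ?_ ?_
        · exact isAcyclic_mono (fromEdgeSet_mono Set.diff_subset) hT'.2.IsAcyclic
        · intro h
          exact hQb (hQa.trans h)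
      have hSTT'' : isSpanningTree G ↑T'' := by
        refine ⟨?_, hconn, hacy⟩
        rw [hcoe]
        intro g hg
        rcases hg with rfl | hg
        · exact hTE (by exact_mod_cast hfT)
        · exact hT'.1 hg.1
      have hsubm : T'' \ T ⊆ (T' \ T).erase s(u, v) := by
        intro g hg
        rw [Finset.mem_sdiff] at hg
        obtain ⟨hg1, hg2⟩ := hg
        rw [hT''def, Finset.mem_insert] at hg1
        rcases hg1 with rfl | hg1
        · exact absurd hfT hg2
        · rw [Finset.mem_erase] at hg1
          rw [Finset.mem_erase]
          exact ⟨hg1.1, Finset.mem_sdiff.mpr ⟨hg1.2, hg2⟩⟩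
      have hlt : (T'' \ T).card < n := by
        calc (T'' \ T).card ≤ ((T' \ T).erase s(u, v)).card := Finset.card_le_card hsubm
          _ < (T' \ T).card := Finset.card_erase_lt_of_mem he
          _ = n := hcard
      have hIH := ih _ hlt T'' rfl hSTT''
      rw [hT''def, Finset.sum_insert (fun h => hfT' (Finset.mem_of_mem_erase h))] at hIH
      have h2 : w s(u, v) + ∑ g ∈ T'.erase s(u, v), w g = ∑ g ∈ T', w g :=
        Finset.add_sum_erase T' w heT'
      linarith
end

section
/- Let T be a finite tree on vertex set V rooted at r, and let C be a partition of V into clusters (each inducing a connected subgraph of T). The cluster-graph T_C is a tree; root it at the cluster containing r, and for a vertex v let c(v) denote the cluster of C containing v. Then for all vertices u, v ∈ V, the cluster containing the lowest common ancestor of u and v in T equals the lowest common ancestor of c(u) and c(v) in the rooted cluster-tree T_C; that is, c(LCA_T(u,v)) = LCA_{T_C}(c(u), c(v)). -/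
open SimpleGraph


/-- In a tree rooted at `r`, `u` is an ancestor of `v` if `u` lies on the (unique) path
from `v` to `r`. -/
def isAncestor {V : Type*} (T : SimpleGraph V) (r u v : V) : Prop :=
  ∀ p : T.Path v r, u ∈ p.1.support

/-- `ℓ` is the lowest common ancestor of `u` and `v` in the tree `T` rooted at `r`. -/
def isLCA {V : Type*} (T : SimpleGraph V) (r ℓ u v : V) : Prop :=
  (isAncestor T r ℓ u ∧ isAncestor T r ℓ v) ∧
    ∀ a : V, isAncestor T r a u → isAncestor T r a v → isAncestor T r a ℓ

/-- The cluster-graph of a graph `T` with respect to a family `C` of vertex sets: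
two distinct clusters are adjacent iff some edge of `T` joins a vertex of one to a
vertex of the other. -/
def clusterGraph {V : Type*} (T : SimpleGraph V) (C : Set (Set V)) : SimpleGraph C :=
  SimpleGraph.fromRel (fun c₁ c₂ => ∃ u ∈ (c₁ : Set V), ∃ v ∈ (c₂ : Set V), T.Adj u v)


section Aux
variable {V : Type*} {T : SimpleGraph V}

lemma isAncestor_iff_walk {r a v : V} :
    isAncestor T r a v ↔ ∀ w : T.Walk v r, a ∈ w.support := by
  classical
  constructor
  · intro h w
    exact w.support_bypass_subset (h ⟨w.bypass, w.bypass_isPath⟩)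
  · intro h p
    exact h p.1

lemma walk_in_set (A : Set V) (hA : (T.induce A).Connected) {x y : V}
    (hx : x ∈ A) (hy : y ∈ A) :
    ∃ w : T.Walk x y, ∀ z ∈ w.support, z ∈ A := by
  obtain ⟨w0⟩ := hA ⟨x, hx⟩ ⟨y, hy⟩
  refine ⟨w0.map (Embedding.induce A).toHom, ?_⟩
  intro z hz
  have hz : z ∈ (w0.map (Embedding.induce A).toHom).support := hz
  rw [Walk.support_map, List.mem_map] at hz
  obtain ⟨⟨z', hz'⟩, -, rfl⟩ := hz
  exact hz'

lemma path_support_subset_walk (hT : T.IsTree) {x y : V} {p : T.Walk x y}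
    (hp : p.IsPath) (w : T.Walk x y) : p.support ⊆ w.support := by
  classical
  have h : p = w.bypass := (hT.existsUnique_path x y).unique hp w.bypass_isPath
  rw [h]
  exact w.support_bypass_subset

lemma exists_nbr {x ℓ : V} (Q : T.Walk x ℓ) (hQ : Q.IsPath) (hne : x ≠ ℓ) :
    ∃ (c : V) (w' : T.Walk x c), T.Adj c ℓ ∧ c ∈ Q.support ∧
      (∀ z ∈ w'.support, z ∈ Q.support) ∧ ℓ ∉ w'.support := by
  obtain ⟨c, hadj, p', hp'⟩ := Q.reverse.exists_eq_cons_of_ne (Ne.symm hne)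
  have hrev : Q.reverse.IsPath := hQ.reverse
  rw [hp', Walk.cons_isPath_iff] at hrev
  refine ⟨c, p'.reverse, hadj.symm, ?_, ?_, ?_⟩
  · have : c ∈ Q.reverse.support := by rw [hp']; simp
    rwa [Walk.support_reverse, List.mem_reverse] at this
  · intro z hz
    rw [Walk.support_reverse, List.mem_reverse] at hz
    have : z ∈ Q.reverse.support := by rw [hp']; simp [hz]
    rwa [Walk.support_reverse, List.mem_reverse] at this
  · rw [Walk.support_reverse, List.mem_reverse]
    exact hrev.2

end Aux

section Key
variable {V : Type*} {T : SimpleGraph V}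

lemma key_lemma (hT : T.IsTree) {r u v ℓ : V} (hℓ : isLCA T r ℓ u v)
    (A : Set V) (hA : (T.induce A).Connected)
    (hu : ∀ w : T.Walk u r, ∃ z ∈ w.support, z ∈ A)
    (hv : ∀ w : T.Walk v r, ∃ z ∈ w.support, z ∈ A) :
    ∀ w : T.Walk ℓ r, ∃ z ∈ w.support, z ∈ A := by
  classical
  intro w
  by_contra hcon
  push_neg at hcon
  have hlA : ℓ ∉ A := hcon ℓ w.start_mem_support
  obtain ⟨P, hP, -⟩ := hT.existsUnique_path ℓ r
  have hPw : P.support ⊆ w.support := path_support_subset_walk hT hP w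
  have hPA : ∀ z ∈ P.support, z ∉ A := fun z hz => hcon z (hPw hz)
  rcases eq_or_ne u ℓ with rfl | hune
  · obtain ⟨z, hz, hzA⟩ := hu w; exact hcon z hz hzA
  rcases eq_or_ne v ℓ with rfl | hvne
  · obtain ⟨z, hz, hzA⟩ := hv w; exact hcon z hz hzA
  -- u side
  obtain ⟨Pu, hPu, -⟩ := hT.existsUnique_path u r
  have hlPu : ℓ ∈ Pu.support := hℓ.1.1 ⟨Pu, hPu⟩
  have hDu : Pu.dropUntil ℓ hlPu = P :=
    (hT.existsUnique_path ℓ r).unique (hPu.dropUntil hlPu) hP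
  obtain ⟨xu, hxuPu, hxuA⟩ := hu Pu
  have hxuQu : xu ∈ (Pu.takeUntil ℓ hlPu).support := by
    have hspec := Walk.take_spec Pu hlPu
    rw [← hspec, Walk.mem_support_append_iff] at hxuPu
    rcases hxuPu with h | h
    · exact h
    · exact absurd hxuA (hPA xu (hDu ▸ h))
  have hxune : xu ≠ ℓ := fun h => hlA (h ▸ hxuA)
  have hRu : ((Pu.takeUntil ℓ hlPu).dropUntil xu hxuQu).IsPath :=
    (hPu.takeUntil hlPu).dropUntil hxuQu
  obtain ⟨c, wu, hcadj, hcR, hwuR, hlwu⟩ :=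
    exists_nbr ((Pu.takeUntil ℓ hlPu).dropUntil xu hxuQu) hRu hxune
  have hcQu : c ∈ (Pu.takeUntil ℓ hlPu).support :=
    (Pu.takeUntil ℓ hlPu).support_dropUntil_subset hxuQu hcR
  -- v side
  obtain ⟨Pv, hPv, -⟩ := hT.existsUnique_path v r
  have hlPv : ℓ ∈ Pv.support := hℓ.1.2 ⟨Pv, hPv⟩
  have hDv : Pv.dropUntil ℓ hlPv = P :=
    (hT.existsUnique_path ℓ r).unique (hPv.dropUntil hlPv) hP
  obtain ⟨xv, hxvPv, hxvA⟩ := hv Pv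
  have hxvQv : xv ∈ (Pv.takeUntil ℓ hlPv).support := by
    have hspec := Walk.take_spec Pv hlPv
    rw [← hspec, Walk.mem_support_append_iff] at hxvPv
    rcases hxvPv with h | h
    · exact h
    · exact absurd hxvA (hPA xv (hDv ▸ h))
  have hxvne : xv ≠ ℓ := fun h => hlA (h ▸ hxvA)
  have hRv : ((Pv.takeUntil ℓ hlPv).dropUntil xv hxvQv).IsPath :=
    (hPv.takeUntil hlPv).dropUntil hxvQv
  obtain ⟨c', wv, hcadj', hcR', hwvR', hlwv⟩ :=
    exists_nbr ((Pv.takeUntil ℓ hlPv).dropUntil xv hxvQv) hRv hxvne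
  have hcQv : c' ∈ (Pv.takeUntil ℓ hlPv).support :=
    (Pv.takeUntil ℓ hlPv).support_dropUntil_subset hxvQv hcR'
  -- walk inside A between xu and xv
  obtain ⟨wA, hwA⟩ := walk_in_set A hA hxuA hxvA
  -- big walk from c to c' avoiding ℓ
  set B : T.Walk c c' := wu.reverse.append (wA.append wv) with hB
  have hlB : ℓ ∉ B.support := by
    rw [hB, Walk.mem_support_append_iff, Walk.mem_support_append_iff]
    push_neg
    refine ⟨?_, fun h => hlA (hwA ℓ h), hlwv⟩
    rw [Walk.support_reverse, List.mem_reverse]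
    exact hlwu
  -- c = c'
  have hcc : c = c' := by
    by_contra hne
    have hp2 : (Walk.cons hcadj (Walk.cons hcadj'.symm Walk.nil)).IsPath := by
      rw [Walk.isPath_def]
      simp [hcadj.ne, hne, hcadj'.ne']
    have := path_support_subset_walk hT hp2 B
    exact hlB (this (by simp))
  -- c is a common ancestor of u and v
  have hancu : isAncestor T r c u := by
    intro p
    rw [(hT.existsUnique_path u r).unique p.2 hPu]
    exact Pu.support_takeUntil_subset hlPu hcQu
  have hancv : isAncestor T r c v := by
    intro p
    rw [(hT.existsUnique_path v r).unique p.2 hPv]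
    exact Pv.support_takeUntil_subset hlPv (hcc ▸ hcQv)
  have hancl : c ∈ P.support := hℓ.2 c hancu hancv ⟨P, hP⟩
  -- contradiction with Pu being a path
  have hnodup : Pu.support.Nodup := hPu.support_nodup
  rw [← Walk.take_spec Pu hlPu, Walk.support_append, List.nodup_append] at hnodup
  refine hnodup.2.2 c hcQu c ?_ rfl
  rw [hDu]
  have := P.support_eq_cons
  rw [this, List.mem_cons] at hancl
  rcases hancl with h | h
  · exact absurd h hcadj.ne
  · exact h

end Key

section Cluster
variable {V : Type*} {T : SimpleGraph V} {C : Set (Set V)}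

lemma cluster_eq (hpart : Setoid.IsPartition C) {c d : C} {z : V}
    (hc : z ∈ (c : Set V)) (hd : z ∈ (d : Set V)) : c = d := by
  obtain ⟨b, -, hb⟩ := hpart.2 z
  exact Subtype.ext ((hb c ⟨c.2, hc⟩).trans (hb d ⟨d.2, hd⟩).symm)

lemma liftWalk (hpart : Setoid.IsPartition C) {x y : V} (w : T.Walk x y) :
    ∀ (c d : C), x ∈ (c : Set V) → y ∈ (d : Set V) →
      ∃ W : (clusterGraph T C).Walk c d, ∀ e ∈ W.support, ∃ z ∈ w.support, z ∈ (e : Set V) := by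
  induction w with
  | @nil x0 =>
    intro c d hx hy
    obtain rfl : c = d := cluster_eq hpart hx hy
    refine ⟨Walk.nil, fun e he => ?_⟩
    simp only [Walk.support_nil, List.mem_singleton] at he
    subst he
    exact ⟨x0, by simp, hx⟩
  | @cons x x₁ y h p ih =>
    intro c d hx hy
    obtain ⟨b, ⟨hbC, hx₁b⟩, -⟩ := hpart.2 x₁
    obtain ⟨W', hW'⟩ := ih ⟨b, hbC⟩ d hx₁b hy
    by_cases hcb : c = (⟨b, hbC⟩ : C)
    · subst hcb
      refine ⟨W', fun e he => ?_⟩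
      obtain ⟨z, hz, hze⟩ := hW' e he
      exact ⟨z, by simp [hz], hze⟩
    · have hadj : (clusterGraph T C).Adj c ⟨b, hbC⟩ := by
        rw [clusterGraph, SimpleGraph.fromRel_adj]
        exact ⟨hcb, Or.inl ⟨x, hx, x₁, hx₁b, h⟩⟩
      refine ⟨Walk.cons hadj W', fun e he => ?_⟩
      rw [Walk.support_cons, List.mem_cons] at he
      rcases he with rfl | he
      · exact ⟨x, by simp, hx⟩
      · obtain ⟨z, hz, hze⟩ := hW' e he
        exact ⟨z, by simp [hz], hze⟩

lemma projWalk (hpart : Setoid.IsPartition C)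
    (hconn : ∀ c ∈ C, (T.induce c).Connected)
    {c d : C} (W : (clusterGraph T C).Walk c d) :
    ∀ {x y : V}, x ∈ (c : Set V) → y ∈ (d : Set V) →
      ∃ w : T.Walk x y, ∀ z ∈ w.support, ∃ e ∈ W.support, z ∈ (e : Set V) := by
  induction W with
  | @nil c =>
    intro x y hx hy
    obtain ⟨w, hw⟩ := walk_in_set (c : Set V) (hconn c c.2) hx hy
    exact ⟨w, fun z hz => ⟨c, by simp, hw z hz⟩⟩
  | @cons c c₁ d hadj W' ih =>
    intro x y hx hy
    have hadj' := hadj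
    rw [clusterGraph, SimpleGraph.fromRel_adj] at hadj'
    obtain ⟨-, hor⟩ := hadj'
    obtain ⟨p, hp, p', hp', hpp'⟩ : ∃ p ∈ (c : Set V), ∃ p' ∈ (c₁ : Set V), T.Adj p p' := by
      rcases hor with ⟨a, ha, b, hb, hab⟩ | ⟨a, ha, b, hb, hab⟩
      · exact ⟨a, ha, b, hb, hab⟩
      · exact ⟨b, hb, a, ha, hab.symm⟩
    obtain ⟨w1, hw1⟩ := walk_in_set (c : Set V) (hconn c c.2) hx hp
    obtain ⟨w2, hw2⟩ := ih hp' hy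
    refine ⟨w1.append (Walk.cons hpp' w2), fun z hz => ?_⟩
    rw [Walk.mem_support_append_iff] at hz
    rcases hz with hz | hz
    · exact ⟨c, by simp, hw1 z hz⟩
    · rw [Walk.support_cons, List.mem_cons] at hz
      rcases hz with rfl | hz
      · exact ⟨c, by simp, hp⟩
      · obtain ⟨e, he, hze⟩ := hw2 z hz
        exact ⟨e, by simp [he], hze⟩

end Cluster

/-- For a finite tree `T` rooted at `r` and a partition `C` of its vertices into
clusters, the cluster containing `LCA_T(u,v)` is the LCA in the cluster-tree `T_C`
(rooted at the cluster containing `r`) of the clusters containing `u` and `v`. -/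
theorem cluster_of_lca_is_lca_of_clusters {V : Type*} [Fintype V]
    (T : SimpleGraph V) (hT : T.IsTree) (r : V)
    (C : Set (Set V)) (hpart : Setoid.IsPartition C)
    (hconn : ∀ c ∈ C, (T.induce c).Connected)
    (u v ℓ : V) (hℓ : isLCA T r ℓ u v)
    (cu cv cl cr : C) (hu : u ∈ (cu : Set V)) (hv : v ∈ (cv : Set V))
    (hl : ℓ ∈ (cl : Set V)) (hr : r ∈ (cr : Set V)) :
    isLCA (clusterGraph T C) cr cl cu cv := by
  classical
  refine ⟨⟨?_, ?_⟩, ?_⟩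
  · rw [isAncestor_iff_walk]
    intro W
    obtain ⟨w, hw⟩ := projWalk hpart hconn W hu hr
    have hlw : ℓ ∈ w.support := isAncestor_iff_walk.1 hℓ.1.1 w
    obtain ⟨e, heW, hle⟩ := hw ℓ hlw
    rwa [cluster_eq hpart hle hl] at heW
  · rw [isAncestor_iff_walk]
    intro W
    obtain ⟨w, hw⟩ := projWalk hpart hconn W hv hr
    have hlw : ℓ ∈ w.support := isAncestor_iff_walk.1 hℓ.1.2 w
    obtain ⟨e, heW, hle⟩ := hw ℓ hlw
    rwa [cluster_eq hpart hle hl] at heW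
  · intro a hau hav
    rw [isAncestor_iff_walk]
    intro W
    obtain ⟨w, hw⟩ := projWalk hpart hconn W hl hr
    have hAu : ∀ w' : T.Walk u r, ∃ z ∈ w'.support, z ∈ (a : Set V) := by
      intro w'
      obtain ⟨W', hW'⟩ := liftWalk hpart w' cu cr hu hr
      exact hW' a (isAncestor_iff_walk.1 hau W')
    have hAv : ∀ w' : T.Walk v r, ∃ z ∈ w'.support, z ∈ (a : Set V) := by
      intro w'
      obtain ⟨W', hW'⟩ := liftWalk hpart w' cv cr hv hr
      exact hW' a (isAncestor_iff_walk.1 hav W')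
    obtain ⟨z, hz, hza⟩ := key_lemma hT hℓ (a : Set V) (hconn a a.2) hAu hAv w
    obtain ⟨e, heW, hze⟩ := hw z hz
    rwa [cluster_eq hpart hze hza] at heW
end

section
/- Let G = (V,E) be a finite connected simple graph with edge-weight function w : E → ℝ, let T ⊆ E be a minimum spanning tree of G, and let e ∈ T be a tree edge that is covered by at least one non-tree edge. Let mc(e) be the minimum of w(f) over all non-tree edges f ∈ E \ T covering e. For t ∈ ℝ, define the modified weight function w_t that agrees with w on all edges except w_t(e) = t. Then e belongs to some minimum spanning tree of G with respect to w_t if and only if t ≤ mc(e). -/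
/-- A non-tree edge `f = {u,v}` covers the tree edge `t` if `t` lies on the unique path
between `u` and `v` in the tree with edge set `T`. -/
def edgeCovers {V : Type*} (T : Set (Sym2 V)) (f t : Sym2 V) : Prop :=
  ∃ u v : V, f = s(u, v) ∧ ∀ p : (SimpleGraph.fromEdgeSet T).Path u v, t ∈ p.1.edges

section Aux

open SimpleGraph

variable {V : Type*}

private lemma fromEdgeSet_sdiff_singleton (S : Set (Sym2 V)) (e : Sym2 V) :
    SimpleGraph.fromEdgeSet S \ SimpleGraph.fromEdgeSet {e} =
      SimpleGraph.fromEdgeSet (S \ {e}) := by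
  ext x y
  simp only [sdiff_adj, fromEdgeSet_adj, Set.mem_diff, Set.mem_singleton_iff, ne_eq]
  tauto

private lemma acyclic_mono {H G : SimpleGraph V} (h : H ≤ G) (hG : G.IsAcyclic) :
    H.IsAcyclic := by
  intro v c hc
  exact hG (c.transfer G fun e heE => edgeSet_mono h (c.edges_subset_edgeSet heE))
    (hc.transfer _)

/-- Walking in `S` one can still reach `a` or `b` after deleting `s(a,b)`. -/
private lemma reach_endpoint_aux {S : Set (Sym2 V)} {a b x y : V}
    (p : (SimpleGraph.fromEdgeSet S).Walk x y)
    (hy : (SimpleGraph.fromEdgeSet (S \ {s(a, b)})).Reachable y a ∨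
      (SimpleGraph.fromEdgeSet (S \ {s(a, b)})).Reachable y b) :
    (SimpleGraph.fromEdgeSet (S \ {s(a, b)})).Reachable x a ∨
      (SimpleGraph.fromEdgeSet (S \ {s(a, b)})).Reachable x b := by
  induction p with
  | nil => exact hy
  | @cons x z _ h p ih =>
    by_cases hef : s(x, z) = s(a, b)
    · rw [Sym2.eq_iff] at hef
      rcases hef with ⟨h1, h2⟩ | ⟨h1, h2⟩
      · subst h1; exact Or.inl (Reachable.refl _)
      · subst h1; exact Or.inr (Reachable.refl _)
    · have hadj : (SimpleGraph.fromEdgeSet (S \ {s(a, b)})).Adj x z := by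
        rw [fromEdgeSet_adj] at h ⊢
        exact ⟨⟨h.1, hef⟩, h.2⟩
      rcases ih hy with h' | h'
      · exact Or.inl (hadj.reachable.trans h')
      · exact Or.inr (hadj.reachable.trans h')

private lemma reach_endpoint {S : Set (Sym2 V)} {a b x : V}
    (p : (SimpleGraph.fromEdgeSet S).Walk x a) :
    (SimpleGraph.fromEdgeSet (S \ {s(a, b)})).Reachable x a ∨
      (SimpleGraph.fromEdgeSet (S \ {s(a, b)})).Reachable x b :=
  reach_endpoint_aux p (Or.inl (Reachable.refl _))

private lemma exists_crossing_edge_s12 {H : SimpleGraph V} (A : V → Prop) :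
    ∀ {x y : V} (p : H.Walk x y), A x → ¬A y →
      ∃ c d, s(c, d) ∈ p.edges ∧ H.Adj c d ∧ A c ∧ ¬A d := by
  intro x y p
  induction p with
  | nil => intro h h'; exact absurd h h'
  | @cons x z _ h p ih =>
    intro hx hy
    by_cases hz : A z
    · obtain ⟨c, d, hcd, hadj, hc, hd⟩ := ih hz hy
      exact ⟨c, d, List.mem_cons_of_mem _ hcd, hadj, hc, hd⟩
    · exact ⟨x, z, by rw [SimpleGraph.Walk.edges_cons]; exact List.mem_cons_self,
        h, hx, hz⟩

private lemma not_reachable_of_cover {S : Set (Sym2 V)} {e : Sym2 V} {u v : V}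
    (hcov : ∀ p : (SimpleGraph.fromEdgeSet S).Path u v, e ∈ p.1.edges) :
    ¬(SimpleGraph.fromEdgeSet (S \ {e})).Reachable u v := by
  classical
  rintro ⟨q⟩
  have hsub : ∀ g ∈ q.toPath.1.edges, g ∈ (SimpleGraph.fromEdgeSet S).edgeSet := by
    intro g hg
    have := q.toPath.1.edges_subset_edgeSet hg
    rw [edgeSet_fromEdgeSet] at this ⊢
    exact ⟨this.1.1, this.2⟩
  have hmem := hcov ⟨q.toPath.1.transfer _ hsub, q.toPath.2.transfer hsub⟩
  rw [SimpleGraph.Walk.edges_transfer] at hmem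
  have := q.toPath.1.edges_subset_edgeSet hmem
  rw [edgeSet_fromEdgeSet] at this
  exact this.1.2 rfl

/-- Swap lemma: replacing a tree edge `e` by a new edge `f = s(u,v)` all of whose
tree paths use `e` yields again a tree. -/
private lemma tree_swap {S : Set (Sym2 V)} {e f : Sym2 V} {a b u v : V}
    (hS : (SimpleGraph.fromEdgeSet S).IsTree)
    (heab : e = s(a, b)) (hfuv : f = s(u, v)) (huv : u ≠ v)
    (hcov : ∀ p : (SimpleGraph.fromEdgeSet S).Path u v, e ∈ p.1.edges) :
    (SimpleGraph.fromEdgeSet ((S \ {e}) ∪ {f})).IsTree := by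
  subst heab; subst hfuv
  set H := SimpleGraph.fromEdgeSet (S \ {s(a, b)}) with hH
  set K := SimpleGraph.fromEdgeSet ((S \ {s(a, b)}) ∪ {s(u, v)}) with hK
  have hnr : ¬H.Reachable u v := not_reachable_of_cover hcov
  have hHK : H ≤ K := fromEdgeSet_mono Set.subset_union_left
  have hHS : H ≤ SimpleGraph.fromEdgeSet S := fromEdgeSet_mono Set.diff_subset
  have hHacyc : H.IsAcyclic := acyclic_mono hHS hS.IsAcyclic
  have hadjK : K.Adj u v := by
    rw [hK, fromEdgeSet_adj]
    exact ⟨Or.inr rfl, huv⟩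
  -- K is acyclic
  have hKacyc : K.IsAcyclic := by
    intro x c hc
    by_cases hf : s(u, v) ∈ c.edges
    · have hle' : K \ SimpleGraph.fromEdgeSet {s(u, v)} ≤ H := by
        rw [hK, fromEdgeSet_sdiff_singleton, hH]
        refine fromEdgeSet_mono ?_
        intro g hg
        rcases hg with ⟨hg1 | hg2, hg3⟩
        · exact hg1
        · exact absurd hg2 hg3
      have hbr : K.IsBridge s(u, v) :=
        isBridge_iff.mpr (fun hr => hnr (hr.mono hle'))
      exact (isBridge_iff_forall_cycle_notMem (c.edges_subset_edgeSet hf)).mp hbr c hc hf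
    · have hsub : ∀ g ∈ c.edges, g ∈ H.edgeSet := by
        intro g hg
        have hgK := c.edges_subset_edgeSet hg
        rw [hK, edgeSet_fromEdgeSet] at hgK
        rw [hH, edgeSet_fromEdgeSet]
        rcases hgK with ⟨hg1 | hg2, hg3⟩
        · exact ⟨hg1, hg3⟩
        · exact absurd (hg2 ▸ hg) hf
      exact hHacyc (c.transfer H hsub) (hc.transfer hsub)
  -- K is connected
  have keyH : ∀ x : V, H.Reachable x a ∨ H.Reachable x b := by
    intro x
    obtain ⟨p⟩ := hS.isConnected.preconnected x a
    exact reach_endpoint p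
  have hab : K.Reachable a b := by
    rcases keyH u with hu | hu <;> rcases keyH v with hv | hv
    · exact absurd (hu.trans hv.symm) hnr
    · exact ((hu.mono hHK).symm.trans hadjK.reachable).trans (hv.mono hHK)
    · exact (((hu.mono hHK).symm.trans hadjK.reachable).trans (hv.mono hHK)).symm
    · exact absurd (hu.trans hv.symm) hnr
  have hA : ∀ x : V, K.Reachable x a := by
    intro x
    rcases keyH x with h | h
    · exact h.mono hHK
    · exact (h.mono hHK).trans hab.symm
  have : Nonempty V := hS.isConnected.nonempty
  exact ⟨⟨fun x y => (hA x).trans (hA y).symm⟩, hKacyc⟩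

/-- Exchange lemma: if `e = s(a,b)` is an edge of the tree `S` not in the tree `T'`,
then some edge `f` of `T'`, not in `S`, covers `e`, and `T' - f + e` is a tree. -/
private lemma exchange_into {S T' : Set (Sym2 V)} {e : Sym2 V} {a b : V}
    (hS : (SimpleGraph.fromEdgeSet S).IsTree)
    (hT' : (SimpleGraph.fromEdgeSet T').IsTree)
    (heab : e = s(a, b)) (hab : a ≠ b) (he : e ∈ S) (he' : e ∉ T') :
    ∃ f ∈ T', f ∉ S ∧
      (∃ c d : V, f = s(c, d) ∧ ∀ p : (SimpleGraph.fromEdgeSet S).Path c d, e ∈ p.1.edges) ∧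
      (SimpleGraph.fromEdgeSet ((T' \ {f}) ∪ {e})).IsTree := by
  classical
  subst heab
  set A : V → Prop := fun x => (SimpleGraph.fromEdgeSet (S \ {s(a, b)})).Reachable x a with hA
  have hadjS : (SimpleGraph.fromEdgeSet S).Adj a b := by
    rw [fromEdgeSet_adj]; exact ⟨he, hab⟩
  have hbr : (SimpleGraph.fromEdgeSet S).IsBridge s(a, b) :=
    isAcyclic_iff_forall_adj_isBridge.mp hS.IsAcyclic hadjS
  have hnrab : ¬(SimpleGraph.fromEdgeSet (S \ {s(a, b)})).Reachable a b := by
    have := isBridge_iff.mp hbr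
    rwa [deleteEdges, fromEdgeSet_sdiff_singleton] at this
  have hAa : A a := Reachable.refl _
  have hAb : ¬A b := fun h => hnrab h.symm
  obtain ⟨q⟩ := hT'.isConnected.preconnected a b
  obtain ⟨c, d, hcd_mem, hadj, hAc, hAd⟩ := exists_crossing_edge_s12 A q.toPath.1 hAa hAb
  rw [fromEdgeSet_adj] at hadj
  refine ⟨s(c, d), hadj.1, ?_, ⟨c, d, rfl, ?_⟩, ?_⟩
  · -- s(c,d) ∉ S
    intro hmem
    have hne : s(c, d) ≠ s(a, b) := by
      intro h
      exact he' (h ▸ hadj.1)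
    have : (SimpleGraph.fromEdgeSet (S \ {s(a, b)})).Adj c d := by
      rw [fromEdgeSet_adj]
      exact ⟨⟨hmem, hne⟩, hadj.2⟩
    exact hAd (this.reachable.symm.trans hAc)
  · -- covering
    intro p
    by_contra hp
    have hsub : ∀ g ∈ p.1.edges, g ∈ (SimpleGraph.fromEdgeSet (S \ {s(a, b)})).edgeSet := by
      intro g hg
      have := p.1.edges_subset_edgeSet hg
      rw [edgeSet_fromEdgeSet] at this ⊢
      exact ⟨⟨this.1, fun h => hp (h ▸ hg)⟩, this.2⟩
    have : (SimpleGraph.fromEdgeSet (S \ {s(a, b)})).Reachable c d :=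
      ⟨p.1.transfer _ hsub⟩
    exact hAd (this.symm.trans hAc)
  · -- T' - f + e is a tree
    refine tree_swap hT' rfl rfl hab ?_
    intro p
    have := (hT'.existsUnique_path a b).unique p.2 q.toPath.2
    rw [this]
    exact hcd_mem

variable [DecidableEq V]

private lemma sum_update_mem {T : Finset (Sym2 V)} {e : Sym2 V} (he : e ∈ T)
    (w : Sym2 V → ℝ) (t : ℝ) :
    ∑ x ∈ T, Function.update w e t x = (∑ x ∈ T.erase e, w x) + t := by
  rw [← Finset.sum_erase_add _ _ he, Function.update_self]
  congr 1
  exact Finset.sum_congr rfl fun x hx =>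
    Function.update_of_ne (Finset.ne_of_mem_erase hx) _ _

private lemma sum_update_not_mem {T : Finset (Sym2 V)} {e : Sym2 V} (he : e ∉ T)
    (w : Sym2 V → ℝ) (t : ℝ) :
    ∑ x ∈ T, Function.update w e t x = ∑ x ∈ T, w x :=
  Finset.sum_congr rfl fun x hx => Function.update_of_ne (fun h : x = e => he (by rw [← h]; exact hx)) _ _

end Aux

open SimpleGraph in
/-- Sensitivity of a tree edge: if `T` is an MST of `G` w.r.t. `w`, `e ∈ T` is covered by
at least one non-tree edge, and `mc` is the minimum of `w f` over non-tree edges `f`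
covering `e`, then for all `t`, the edge `e` belongs to some MST w.r.t. the weight
function modified so that `e` has weight `t`, iff `t ≤ mc`. -/
theorem tree_edge_sensitivity {V : Type*} [Fintype V] [DecidableEq V]
    (G : SimpleGraph V) (hG : G.Connected) (w : Sym2 V → ℝ)
    (T : Finset (Sym2 V)) (hMST : isMST G w T)
    (e : Sym2 V) (he : e ∈ T)
    (mc : ℝ)
    (hmc : IsLeast (w '' {f | f ∈ G.edgeSet ∧ f ∉ T ∧ edgeCovers (↑T) f e}) mc) :
    ∀ t : ℝ,
      (∃ T' : Finset (Sym2 V), isMST G (Function.update w e t) T' ∧ e ∈ T') ↔ t ≤ mc := by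
  obtain ⟨⟨hTsub, hTtree⟩, hTmin⟩ := hMST
  obtain ⟨⟨a, b⟩, hab_eq⟩ := Quot.exists_rep e
  have he_ab : e = s(a, b) := hab_eq.symm
  have heG : e ∈ G.edgeSet := hTsub he
  have hadj_ab : G.Adj a b := by rwa [he_ab, mem_edgeSet] at heG
  have hab : a ≠ b := hadj_ab.ne
  intro t
  constructor
  · -- forward direction
    rintro ⟨T', ⟨⟨hT'sub, hT'tree⟩, hT'min⟩, heT'⟩
    obtain ⟨f₀, ⟨hf₀G, hf₀T, u, v, hf₀uv, hf₀cov⟩, hwf₀⟩ := hmc.1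
    have huv : u ≠ v := by
      rw [hf₀uv, mem_edgeSet] at hf₀G
      exact hf₀G.ne
    have htree : (SimpleGraph.fromEdgeSet (((↑T : Set (Sym2 V)) \ {e}) ∪ {f₀})).IsTree :=
      tree_swap hTtree he_ab hf₀uv huv hf₀cov
    have hef₀ : e ≠ f₀ := fun h => hf₀T (by rw [← h]; exact he)
    have hf₀erase : f₀ ∉ T.erase e := fun h => hf₀T (Finset.mem_of_mem_erase h)
    have hScoe : (↑(insert f₀ (T.erase e)) : Set (Sym2 V)) = ((↑T : Set (Sym2 V)) \ {e}) ∪ {f₀} := by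
      rw [Finset.coe_insert, Finset.coe_erase, Set.union_singleton]
    have hSspan : isSpanningTree G ↑(insert f₀ (T.erase e)) := by
      rw [hScoe]
      refine ⟨Set.union_subset (Set.diff_subset.trans hTsub) ?_, htree⟩
      rw [Set.singleton_subset_iff]
      exact hf₀G
    have h1 := hT'min _ hSspan
    have h2 := hTmin T' ⟨hT'sub, hT'tree⟩
    rw [sum_update_mem heT'] at h1
    have hnotmem : e ∉ insert f₀ (T.erase e) := by
      intro h
      rcases Finset.mem_insert.mp h with h | h
      · exact hef₀ h
      · exact (Finset.mem_erase.mp h).1 rfl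
    rw [sum_update_not_mem hnotmem, Finset.sum_insert hf₀erase] at h1
    have hEq3 : ∑ x ∈ T'.erase e, w x + w e = ∑ x ∈ T', w x :=
      Finset.sum_erase_add _ _ heT'
    have hEq4 : ∑ x ∈ T.erase e, w x + w e = ∑ x ∈ T, w x :=
      Finset.sum_erase_add _ _ he
    linarith
  · -- backward direction
    intro ht
    refine ⟨T, ⟨⟨hTsub, hTtree⟩, ?_⟩, he⟩
    intro T' hT'span
    obtain ⟨hT'sub, hT'tree⟩ := hT'span
    by_cases heT' : e ∈ T'
    · have h2 := hTmin T' ⟨hT'sub, hT'tree⟩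
      rw [sum_update_mem he, sum_update_mem heT']
      have hEq3 : ∑ x ∈ T'.erase e, w x + w e = ∑ x ∈ T', w x :=
        Finset.sum_erase_add _ _ heT'
      have hEq4 : ∑ x ∈ T.erase e, w x + w e = ∑ x ∈ T, w x :=
        Finset.sum_erase_add _ _ he
      linarith
    · have heT'set : e ∉ (↑T' : Set (Sym2 V)) := fun h => heT' h
      obtain ⟨f, hfT', hfS, ⟨c, d, hfcd, hcov⟩, htree⟩ :=
        exchange_into hTtree hT'tree he_ab hab (Finset.mem_coe.mpr he) heT'set
      have hfT'fin : f ∈ T' := hfT'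
      have hfTfin : f ∉ T := fun h => hfS h
      have hmcf : mc ≤ w f :=
        hmc.2 ⟨f, ⟨hT'sub hfT', hfTfin, c, d, hfcd, hcov⟩, rfl⟩
      have hef : e ≠ f := fun h => heT' (by rw [h]; exact hfT'fin)
      have heerase : e ∉ T'.erase f := fun h => heT' (Finset.mem_of_mem_erase h)
      have hScoe : (↑(insert e (T'.erase f)) : Set (Sym2 V)) =
          ((↑T' : Set (Sym2 V)) \ {f}) ∪ {e} := by
        rw [Finset.coe_insert, Finset.coe_erase, Set.union_singleton]
      have hspan : isSpanningTree G ↑(insert e (T'.erase f)) := by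
        rw [hScoe]
        refine ⟨Set.union_subset (Set.diff_subset.trans hT'sub) ?_, htree⟩
        rw [Set.singleton_subset_iff]
        exact heG
      have h3 := hTmin _ hspan
      rw [Finset.sum_insert heerase] at h3
      rw [sum_update_mem he, sum_update_not_mem heT']
      have hEq4 : ∑ x ∈ T.erase e, w x + w e = ∑ x ∈ T, w x :=
        Finset.sum_erase_add _ _ he
      have hEq5 : ∑ x ∈ T'.erase f, w x + w f = ∑ x ∈ T', w x :=
        Finset.sum_erase_add _ _ hfT'fin
      linarith
end
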